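/- The sum over k >= 1 of p_k^{(2)} equals 1, where p_k^{(2)} = 2^{-k} * integral from 0 to infinity of [x^{-3/2} (1 - e^{-x}) Gamma(-1/2,x)^{k-1}] / [x^{-1/2} e^{-x} + gamma(1/2,x)]^k dx. -/

import Mathlib

open Set MeasureTheory Filter Real Topology

/-- Upper incomplete gamma function. -/
noncomputable def Gup (ν x : ℝ) : ℝ := ∫ t in Ioi x, Real.exp (-t) * t ^ (ν - 1)

/-- Lower incomplete gamma function. -/
noncomputable def glow (ν x : ℝ) : ℝ := ∫ t in Ioc (0 : ℝ) x, Real.exp (-t) * t ^ (ν - 1)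

noncomputable def p2 (k : ℕ) : ℝ :=
  (1 / 2 ^ k) * ∫ x in Ioi (0 : ℝ),
    (x ^ (-(3 / 2) : ℝ) * (1 - Real.exp (-x)) * Gup (-(1 / 2)) x ^ (k - 1)) /
      (x ^ (-(1 / 2) : ℝ) * Real.exp (-x) + glow (1 / 2) x) ^ k

noncomputable def fh (t : ℝ) : ℝ := Real.exp (-t) * t ^ (-(1/2) : ℝ)

lemma fh_def : fh = fun t : ℝ => Real.exp (-t) * t ^ ((1:ℝ)/2 - 1) := by
  funext t; rw [fh]; norm_num

lemma fh_int : IntegrableOn fh (Ioi 0) := by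
  rw [fh_def]; exact Real.GammaIntegral_convergent (by norm_num)

lemma fh_nonneg {t : ℝ} (ht : 0 ≤ t) : 0 ≤ fh t :=
  mul_nonneg (Real.exp_nonneg _) (Real.rpow_nonneg ht _)

lemma glow_eq (x : ℝ) : glow (1/2) x = ∫ t in Ioc (0:ℝ) x, fh t := by
  rw [glow, fh_def]

lemma glow_eq' {x : ℝ} (hx : 0 ≤ x) : glow (1/2) x = ∫ t in (0:ℝ)..x, fh t := by
  rw [glow_eq, intervalIntegral.integral_of_le hx]

lemma Gup_half (x : ℝ) : Gup (1/2) x = ∫ t in Ioi x, fh t := by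
  rw [Gup, fh_def]

lemma Gup_neg_half (x : ℝ) : Gup (-(1/2)) x = ∫ t in Ioi x, Real.exp (-t) * t ^ (-(3/2) : ℝ) := by
  rw [Gup]; norm_num

lemma glow_nonneg {x : ℝ} : 0 ≤ glow (1/2) x := by
  rw [glow_eq]
  exact setIntegral_nonneg measurableSet_Ioc fun t ht => fh_nonneg ht.1.le

lemma glow_mono : Monotone (glow (1/2)) := by
  intro a b hab
  rw [glow_eq, glow_eq]
  apply setIntegral_mono_set (fh_int.mono_set Ioc_subset_Ioi_self)
    ((ae_restrict_iff' measurableSet_Ioc).2 (Eventually.of_forall fun t ht => fh_nonneg ht.1.le))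
  exact HasSubset.Subset.eventuallyLE (Ioc_subset_Ioc le_rfl hab)

lemma glow_measurable : Measurable (glow (1/2)) := glow_mono.measurable

lemma glow_split {x : ℝ} (hx : 0 < x) : glow (1/2) x + Gup (1/2) x = Real.sqrt π := by
  rw [glow_eq, Gup_half]
  rw [← setIntegral_union (Ioc_disjoint_Ioi le_rfl) measurableSet_Ioi
    (fh_int.mono_set Ioc_subset_Ioi_self) (fh_int.mono_set (Ioi_subset_Ioi hx.le)),
    Ioc_union_Ioi_eq_Ioi hx.le]
  rw [show Real.sqrt π = Real.Gamma (1/2) from (Real.Gamma_one_half_eq).symm,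
    Real.Gamma_eq_integral (by norm_num : (0:ℝ) < 1/2), ← fh_def]

noncomputable def f3 (t : ℝ) : ℝ := Real.exp (-t) * t ^ (-(3/2) : ℝ)

lemma hasDerivAt_exp_neg (t : ℝ) : HasDerivAt (fun t : ℝ => Real.exp (-t)) (-Real.exp (-t)) t := by
  simpa [Function.comp_def] using (Real.hasDerivAt_exp (-t)).comp t (hasDerivAt_neg t)

lemma hasDerivAt_anti {t : ℝ} (ht : 0 < t) :
    HasDerivAt (fun t : ℝ => -2 * t ^ (-(1/2):ℝ) * Real.exp (-t))
      (f3 t + 2 * fh t) t := by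
  have h1 : HasDerivAt (fun t : ℝ => t ^ (-(1/2):ℝ)) (-(1/2) * t ^ (-(1/2) - 1 : ℝ)) t :=
    Real.hasDerivAt_rpow_const (Or.inl ht.ne')
  have := (h1.const_mul (-2)).mul (hasDerivAt_exp_neg t)
  refine HasDerivAt.congr_deriv this ?_
  rw [f3, fh, show (-(1/2) - 1 : ℝ) = -(3/2) by norm_num]
  ring

lemma tendsto_anti : Tendsto (fun t : ℝ => -2 * t ^ (-(1/2):ℝ) * Real.exp (-t)) atTop (𝓝 0) := by
  have h1 : Tendsto (fun t : ℝ => t ^ (-(1/2):ℝ)) atTop (𝓝 0) :=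
    tendsto_rpow_neg_atTop (by norm_num)
  have := (h1.const_mul (-2)).mul Real.tendsto_exp_neg_atTop_nhds_zero
  simpa using this

lemma deriv_nonneg {x : ℝ} (hx : 0 < x) : ∀ t ∈ Ioi x, 0 ≤ f3 t + 2 * fh t := by
  intro t ht
  have ht : (0:ℝ) < t := hx.trans ht
  exact add_nonneg (mul_nonneg (Real.exp_nonneg _) (Real.rpow_nonneg ht.le _))
    (mul_nonneg (by norm_num) (fh_nonneg ht.le))

lemma sum_int {x : ℝ} (hx : 0 < x) :
    IntegrableOn (fun t : ℝ => f3 t + 2 * fh t) (Ioi x) :=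
  integrableOn_Ioi_deriv_of_nonneg
    ((hasDerivAt_anti hx).continuousAt.continuousWithinAt)
    (fun t ht => hasDerivAt_anti (hx.trans ht))
    (deriv_nonneg hx) tendsto_anti

lemma f3_int {x : ℝ} (hx : 0 < x) : IntegrableOn f3 (Ioi x) := by
  have h2 : IntegrableOn (fun t => 2 * fh t) (Ioi x) :=
    (fh_int.mono_set (Ioi_subset_Ioi hx.le)).const_mul 2
  refine ((sum_int hx).sub h2).congr (Eventually.of_forall fun t => ?_)
  simp

lemma IBP {x : ℝ} (hx : 0 < x) :
    (∫ t in Ioi x, (f3 t + 2 * fh t)) = 2 * (x ^ (-(1/2):ℝ) * Real.exp (-x)) := by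
  have := integral_Ioi_of_hasDerivAt_of_nonneg
    ((hasDerivAt_anti hx).continuousAt.continuousWithinAt)
    (fun t ht => hasDerivAt_anti (hx.trans ht))
    (deriv_nonneg hx) tendsto_anti
  rw [this]; ring

lemma Gup_id {x : ℝ} (hx : 0 < x) :
    Gup (-(1/2)) x = 2 * (x ^ (-(1/2):ℝ) * Real.exp (-x) + glow (1/2) x) - 2 * Real.sqrt π := by
  have hfh : IntegrableOn fh (Ioi x) := fh_int.mono_set (Ioi_subset_Ioi hx.le)
  have hI := IBP hx
  rw [integral_add (f3_int hx) (hfh.const_mul 2), integral_const_mul] at hI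
  have hsplit := glow_split hx
  have hGh : Gup (1/2) x = ∫ t in Ioi x, fh t := Gup_half x
  have hG3 : Gup (-(1/2)) x = ∫ t in Ioi x, f3 t := Gup_neg_half x
  rw [← hGh] at hI
  rw [hG3]
  linarith

lemma fh_measurable : Measurable fh :=
  (Real.measurable_exp.comp measurable_neg).mul (measurable_id.pow measurable_const)

lemma fh_continuousAt {x : ℝ} (hx : 0 < x) : ContinuousAt fh x := by
  exact ((Real.continuous_exp.comp continuous_neg).continuousAt).mul
    (Real.continuousAt_rpow_const x _ (Or.inl hx.ne'))

lemma glow_hasDeriv {x : ℝ} (hx : 0 < x) : HasDerivAt (glow (1/2)) (fh x) x := by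
  have hint : IntervalIntegrable fh volume 0 x := by
    rw [intervalIntegrable_iff_integrableOn_Ioc_of_le hx.le]
    exact fh_int.mono_set Ioc_subset_Ioi_self
  have hm : StronglyMeasurableAtFilter fh (𝓝 x) :=
    ⟨univ, univ_mem, fh_measurable.aestronglyMeasurable⟩
  have := intervalIntegral.integral_hasDerivAt_right hint hm (fh_continuousAt hx)
  apply this.congr_of_eventuallyEq
  filter_upwards [Ioi_mem_nhds hx] with y hy
  exact glow_eq' hy.le

lemma Gup_nonneg {x : ℝ} (hx : 0 < x) : 0 ≤ Gup (-(1/2)) x := by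
  rw [Gup_neg_half]
  exact setIntegral_nonneg measurableSet_Ioi fun t ht =>
    mul_nonneg (Real.exp_nonneg _) (Real.rpow_nonneg (hx.trans ht).le _)

noncomputable def Bf (x : ℝ) : ℝ := x ^ (-(1/2):ℝ) * Real.exp (-x) + glow (1/2) x

lemma Bf_pos {x : ℝ} (hx : 0 < x) : 0 < Bf x :=
  add_pos_of_pos_of_nonneg (mul_pos (Real.rpow_pos_of_pos hx _) (Real.exp_pos _)) glow_nonneg

lemma sqrtpi_le_Bf {x : ℝ} (hx : 0 < x) : Real.sqrt π ≤ Bf x := by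
  have h := Gup_nonneg hx
  rw [Gup_id hx] at h
  rw [Bf]
  linarith

lemma sqrtpi_pos : (0:ℝ) < Real.sqrt π := Real.sqrt_pos.2 Real.pi_pos

lemma glow_le {x : ℝ} (hx : 0 < x) : glow (1/2) x ≤ 2 * x ^ ((1:ℝ)/2) := by
  have hint : IntegrableOn (fun t : ℝ => t ^ (-(1/2):ℝ)) (Ioc 0 x) := by
    rw [← intervalIntegrable_iff_integrableOn_Ioc_of_le hx.le]
    exact intervalIntegral.intervalIntegrable_rpow' (by norm_num)
  have h1 : glow (1/2) x ≤ ∫ t in Ioc (0:ℝ) x, t ^ (-(1/2):ℝ) := by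
    rw [glow_eq]
    apply setIntegral_mono_on (fh_int.mono_set Ioc_subset_Ioi_self) hint measurableSet_Ioc
    intro t ht
    rw [fh]
    calc Real.exp (-t) * t ^ (-(1/2):ℝ) ≤ 1 * t ^ (-(1/2):ℝ) :=
          mul_le_mul_of_nonneg_right (Real.exp_le_one_iff.2 (by linarith [ht.1]))
            (Real.rpow_nonneg ht.1.le _)
      _ = t ^ (-(1/2):ℝ) := one_mul _
  have h2 : (∫ t in Ioc (0:ℝ) x, t ^ (-(1/2):ℝ)) = 2 * x ^ ((1:ℝ)/2) := by
    rw [← intervalIntegral.integral_of_le hx.le, integral_rpow (Or.inl (by norm_num)),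
      show (-(1/2) + 1 : ℝ) = 1/2 by norm_num, Real.zero_rpow (by norm_num)]
    ring
  linarith

lemma glow_tendsto : Tendsto (glow (1/2)) atTop (𝓝 (Real.sqrt π)) := by
  have h := MeasureTheory.intervalIntegral_tendsto_integral_Ioi 0 fh_int tendsto_id
  have hval : (∫ t in Ioi (0:ℝ), fh t) = Real.sqrt π := by
    rw [show Real.sqrt π = Real.Gamma (1/2) from Real.Gamma_one_half_eq.symm,
      Real.Gamma_eq_integral (by norm_num : (0:ℝ) < 1/2), ← fh_def]
  rw [hval] at h
  apply h.congr'
  filter_upwards [eventually_ge_atTop (0:ℝ)] with y hy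
  exact (glow_eq' hy).symm

noncomputable def hfun (x : ℝ) : ℝ := x ^ (-(3/2):ℝ) * (1 - Real.exp (-x))
noncomputable def Hfun (x : ℝ) : ℝ :=
  -2 * x ^ (-(1/2):ℝ) * (1 - Real.exp (-x)) + 2 * glow (1/2) x

lemma hfun_nonneg {x : ℝ} (hx : 0 < x) : 0 ≤ hfun x :=
  mul_nonneg (Real.rpow_nonneg hx.le _)
    (by linarith [Real.exp_le_one_iff.2 (by linarith : -x ≤ 0)])

lemma Hfun_hasDeriv {x : ℝ} (hx : 0 < x) : HasDerivAt Hfun (hfun x) x := by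
  have h1 : HasDerivAt (fun t : ℝ => t ^ (-(1/2):ℝ)) (-(1/2) * x ^ (-(1/2) - 1 : ℝ)) x :=
    Real.hasDerivAt_rpow_const (Or.inl hx.ne')
  have h2 : HasDerivAt (fun t : ℝ => 1 - Real.exp (-t)) (Real.exp (-x)) x := by
    simpa using (hasDerivAt_exp_neg x).const_sub 1
  have h3 := ((h1.const_mul (-2)).mul h2).add ((glow_hasDeriv hx).const_mul 2)
  refine HasDerivAt.congr_deriv h3 ?_
  rw [hfun, fh, show (-(1/2) - 1 : ℝ) = -(3/2) by norm_num]
  ring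

lemma Hfun_zero : Hfun 0 = 0 := by
  have h : glow (1/2) 0 = 0 := by rw [glow_eq, Set.Ioc_self]; simp
  rw [Hfun, h]
  norm_num

lemma Hfun_cont0 : ContinuousWithinAt Hfun (Ici 0) 0 := by
  rw [← continuousWithinAt_Ioi_iff_Ici]
  rw [ContinuousWithinAt, Hfun_zero]
  have hb : Tendsto (fun x : ℝ => x ^ ((1:ℝ)/2)) (𝓝[>] (0:ℝ)) (𝓝 0) := by
    have := (Real.continuousAt_rpow_const 0 (1/2) (Or.inr (by norm_num))).tendsto
    rw [Real.zero_rpow (by norm_num)] at this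
    exact this.mono_left nhdsWithin_le_nhds
  have lo : Tendsto (fun x : ℝ => -2 * x ^ ((1:ℝ)/2)) (𝓝[>] (0:ℝ)) (𝓝 0) := by
    simpa using hb.const_mul (-2)
  have up : Tendsto (fun x : ℝ => 4 * x ^ ((1:ℝ)/2)) (𝓝[>] (0:ℝ)) (𝓝 0) := by
    simpa using hb.const_mul 4
  refine tendsto_of_tendsto_of_tendsto_of_le_of_le' lo up ?_ ?_
  · filter_upwards [self_mem_nhdsWithin] with x hx
    have hx : (0:ℝ) < x := hx
    have key : x ^ (-(1/2):ℝ) * x = x ^ ((1:ℝ)/2) := by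
      rw [← Real.rpow_add_one hx.ne' (-(1/2))]; norm_num
    have hle : 1 - Real.exp (-x) ≤ x := by nlinarith [Real.add_one_le_exp (-x)]
    have h1 : x ^ (-(1/2):ℝ) * (1 - Real.exp (-x)) ≤ x ^ ((1:ℝ)/2) := by
      calc x ^ (-(1/2):ℝ) * (1 - Real.exp (-x)) ≤ x ^ (-(1/2):ℝ) * x :=
            mul_le_mul_of_nonneg_left hle (Real.rpow_nonneg hx.le _)
        _ = x ^ ((1:ℝ)/2) := key
    have h2 : (0:ℝ) ≤ glow (1/2) x := glow_nonneg
    rw [Hfun]; linarith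
  · filter_upwards [self_mem_nhdsWithin] with x hx
    have hx : (0:ℝ) < x := hx
    have h1 : 0 ≤ x ^ (-(1/2):ℝ) * (1 - Real.exp (-x)) :=
      mul_nonneg (Real.rpow_nonneg hx.le _)
        (by linarith [Real.exp_le_one_iff.2 (by linarith : -x ≤ 0)])
    have h2 := glow_le hx
    rw [Hfun]; linarith

lemma Hfun_tendsto : Tendsto Hfun atTop (𝓝 (2 * Real.sqrt π)) := by
  have h1 : Tendsto (fun x : ℝ => -2 * x ^ (-(1/2):ℝ) * (1 - Real.exp (-x))) atTop (𝓝 0) := by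
    have := (((tendsto_rpow_neg_atTop (by norm_num : (0:ℝ) < 1/2)).const_mul (-2)).mul
      ((Real.tendsto_exp_neg_atTop_nhds_zero).const_sub 1))
    simpa using this
  have h2 := glow_tendsto.const_mul 2
  have := h1.add h2
  simp only [zero_add] at this
  exact this.congr fun x => by rw [Hfun]

lemma hfun_int : IntegrableOn hfun (Ioi 0) :=
  integrableOn_Ioi_deriv_of_nonneg Hfun_cont0 (fun x hx => Hfun_hasDeriv hx)
    (fun x hx => hfun_nonneg hx) Hfun_tendsto

lemma hfun_integral : (∫ x in Ioi (0:ℝ), hfun x) = 2 * Real.sqrt π := by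
  have := integral_Ioi_of_hasDerivAt_of_nonneg Hfun_cont0 (fun x hx => Hfun_hasDeriv hx)
    (fun x hx => hfun_nonneg hx) Hfun_tendsto
  rw [this, Hfun_zero]; ring

noncomputable def g (k : ℕ) (x : ℝ) : ℝ :=
  hfun x / (2 * Bf x) * (1 - Real.sqrt π / Bf x) ^ k

lemma Bf_measurable : Measurable Bf :=
  ((measurable_id.pow measurable_const).mul (Real.measurable_exp.comp measurable_neg)).add
    glow_measurable

lemma hfun_measurable : Measurable hfun :=
  (measurable_id.pow measurable_const).mul
    (measurable_const.sub (Real.measurable_exp.comp measurable_neg))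

lemma g_measurable (k : ℕ) : Measurable (g k) :=
  ((hfun_measurable.div (Bf_measurable.const_mul 2)).mul
    ((measurable_const.sub (Bf_measurable.const_div _)).pow measurable_const))

lemma r_nonneg {x : ℝ} (hx : 0 < x) : 0 ≤ 1 - Real.sqrt π / Bf x :=
  sub_nonneg.2 ((div_le_one (Bf_pos hx)).2 (sqrtpi_le_Bf hx))

lemma r_lt_one {x : ℝ} (hx : 0 < x) : 1 - Real.sqrt π / Bf x < 1 := by
  have : 0 < Real.sqrt π / Bf x := div_pos sqrtpi_pos (Bf_pos hx)
  linarith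

lemma g_nonneg {x : ℝ} (hx : 0 < x) (k : ℕ) : 0 ≤ g k x :=
  mul_nonneg (div_nonneg (hfun_nonneg hx) (by linarith [Bf_pos hx]))
    (pow_nonneg (r_nonneg hx) k)

lemma p2_eq (k : ℕ) : p2 (k + 1) = ∫ x in Ioi (0:ℝ), g k x := by
  rw [p2, ← integral_const_mul]
  apply setIntegral_congr_fun measurableSet_Ioi
  intro x hx
  have hx : (0:ℝ) < x := hx
  have hB := Bf_pos hx
  have hBdef : x ^ (-(1/2):ℝ) * Real.exp (-x) + glow (1/2) x = Bf x := rfl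
  have hA : Gup (-(1/2)) x = 2 * Bf x - 2 * Real.sqrt π := by rw [Gup_id hx]; rfl
  simp only [Nat.add_sub_cancel]
  rw [hBdef, hA, g]
  simp only [hfun]
  rw [show (2 * Bf x - 2 * Real.sqrt π) = 2 * (Bf x - Real.sqrt π) by ring, mul_pow,
    show (1 - Real.sqrt π / Bf x) = (Bf x - Real.sqrt π) / Bf x by field_simp, div_pow]
  field_simp
  ring

theorem sum_p2 : ∑' k : ℕ, p2 (k + 1) = 1 := by
  set μ := volume.restrict (Ioi (0:ℝ)) with hμ
  have hnn : ∀ k : ℕ, 0 ≤ᵐ[μ] g k := fun k =>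
    (ae_restrict_iff' measurableSet_Ioi).2 (Eventually.of_forall fun x hx => g_nonneg hx k)
  have key : ∀ k : ℕ, p2 (k+1) = (∫⁻ x, ENNReal.ofReal (g k x) ∂μ).toReal := fun k => by
    rw [p2_eq k, integral_eq_lintegral_of_nonneg_ae (hnn k) (g_measurable k).aestronglyMeasurable]
  have hsum : (∑' k : ℕ, ∫⁻ x, ENNReal.ofReal (g k x) ∂μ) = 1 := by
    rw [← lintegral_tsum (fun k => ((g_measurable k).ennreal_ofReal).aemeasurable)]
    have hae : ∀ᵐ x ∂μ, (∑' k : ℕ, ENNReal.ofReal (g k x))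
        = ENNReal.ofReal (hfun x / (2 * Real.sqrt π)) := by
      refine (ae_restrict_iff' measurableSet_Ioi).2 (Eventually.of_forall fun x hx => ?_)
      have hx : (0:ℝ) < x := hx
      have hB := Bf_pos hx
      have hsm : Summable (fun k : ℕ => g k x) :=
        (summable_geometric_of_lt_one (r_nonneg hx) (r_lt_one hx)).mul_left _
      rw [← ENNReal.ofReal_tsum_of_nonneg (fun k => g_nonneg hx k) hsm]
      congr 1
      have h1 : (∑' k : ℕ, g k x) = hfun x / (2 * Bf x) * (Real.sqrt π / Bf x)⁻¹ := by
        simp only [g]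
        rw [tsum_mul_left, tsum_geometric_of_lt_one (r_nonneg hx) (r_lt_one hx),
          show (1 - (1 - Real.sqrt π / Bf x)) = Real.sqrt π / Bf x by ring]
      rw [h1]
      have hBne : Bf x ≠ 0 := hB.ne'
      have hsne : Real.sqrt π ≠ 0 := sqrtpi_pos.ne'
      field_simp
    rw [lintegral_congr_ae hae,
      ← ofReal_integral_eq_lintegral_ofReal (hfun_int.div_const _)
        ((ae_restrict_iff' measurableSet_Ioi).2 (Eventually.of_forall fun x hx =>
          div_nonneg (hfun_nonneg hx) (by positivity))),
      integral_div, hfun_integral, div_self (by positivity : (2:ℝ) * Real.sqrt π ≠ 0)]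
    exact ENNReal.ofReal_one
  have hfin : ∀ k : ℕ, (∫⁻ x, ENNReal.ofReal (g k x) ∂μ) ≠ ⊤ := by
    intro k
    have h1 : (∫⁻ x, ENNReal.ofReal (g k x) ∂μ)
        ≤ ∑' k : ℕ, ∫⁻ x, ENNReal.ofReal (g k x) ∂μ :=
      ENNReal.le_tsum k
    rw [hsum] at h1
    exact ne_of_lt (lt_of_le_of_lt h1 ENNReal.one_lt_top)
  calc ∑' k : ℕ, p2 (k+1) = ∑' k : ℕ, (∫⁻ x, ENNReal.ofReal (g k x) ∂μ).toReal :=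
        tsum_congr key
    _ = (∑' k : ℕ, ∫⁻ x, ENNReal.ofReal (g k x) ∂μ).toReal :=
        (ENNReal.tsum_toReal_eq hfin).symm
    _ = 1 := by rw [hsum]; rfl
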